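/- Let A ∈ K^{5×2} be a matrix each of whose two columns contains a nonzero entry, and suppose that deg(a_{p1}a_{q2} − a_{q1}a_{p2}) = min(deg a_{p1} + deg a_{q2}, deg a_{q1} + deg a_{p2}) for all distinct p,q ∈ {1,…,5}. Let (h_1,…,h_5) ∈ ℝ^5, and for i ∈ {1,2} let Θ_i denote the set of indices η ∈ {1,…,5} attaining the minimum min_{μ=1}^5 (deg a_{μi} + h_μ). If |Θ_1| ≥ 2, |Θ_2| ≥ 2, and |Θ_1 ∪ Θ_2| ≥ 3, then there exist x_1,…,x_5 ∈ K with deg x_j = h_j for every j ∈ {1,…,5} and Σ_{j=1}^5 a_{ji} x_j = 0 for i = 1 and i = 2. -/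

import Mathlib

noncomputable section

/-- The field of generalized power series over ℝ with complex coefficients. -/
abbrev K : Type := HahnSeries ℝ ℂ

open Classical in
/-- The degree of an element of `K`: the least exponent of its support, `⊤` for `0`. -/
noncomputable def Kdeg (a : K) : WithTop ℝ :=
  if a = 0 then ⊤ else ((HahnSeries.order a : ℝ) : WithTop ℝ)

/-- A square real matrix is tropically non-singular if the minimum in the tropical
permanent is attained by exactly one permutation. -/
def TropNonsing {k : ℕ} (S : Matrix (Fin k) (Fin k) ℝ) : Prop :=
  ∃! σ : Equiv.Perm (Fin k), ∀ τ : Equiv.Perm (Fin k),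
    (∑ i, S i (σ i)) ≤ ∑ i, S i (τ i)

/-- The tropical rank: the largest size of a tropically non-singular square submatrix. -/
noncomputable def tropRank {m n : ℕ} (A : Matrix (Fin m) (Fin n) ℝ) : ℕ :=
  sSup {r : ℕ | ∃ (ρ : Fin r → Fin m) (c : Fin r → Fin n),
    Function.Injective ρ ∧ Function.Injective c ∧ TropNonsing (A.submatrix ρ c)}

/-- A matrix over `K` is a lift of a real matrix if degrees of entries match. -/
def IsLift {m n : ℕ} (F : Matrix (Fin m) (Fin n) K) (B : Matrix (Fin m) (Fin n) ℝ) : Prop :=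
  ∀ i j, Kdeg (F i j) = (B i j : WithTop ℝ)

/-- The Kapranov rank: the smallest rank over `K` of a lift. -/
noncomputable def kapRank {m n : ℕ} (B : Matrix (Fin m) (Fin n) ℝ) : ℕ :=
  sInf {r : ℕ | ∃ F : Matrix (Fin m) (Fin n) K, IsLift F B ∧ F.rank = r}

/-- The tuple `lam` realizes the tropical dependence of the rows of `A`. -/
def Realizes {m n : ℕ} (lam : Fin m → WithTop ℝ) (A : Matrix (Fin m) (Fin n) ℝ) : Prop :=
  (∃ τ, lam τ ≠ ⊤) ∧
  ∀ k : Fin n, ∃ τ₁ τ₂ : Fin m, τ₁ ≠ τ₂ ∧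
    (∀ τ, lam τ₁ + (A τ₁ k : WithTop ℝ) ≤ lam τ + (A τ k : WithTop ℝ)) ∧
    (∀ τ, lam τ₂ + (A τ₂ k : WithTop ℝ) ≤ lam τ + (A τ k : WithTop ℝ))

open Classical in
/-- The pattern of a real matrix, with entries in `{0, ∞} ⊆ ℝ ∪ {∞}`. -/
noncomputable def pat {m n : ℕ} (A : Matrix (Fin m) (Fin n) ℝ) (u : Fin m) (v : Fin n) :
    WithTop ℝ :=
  if ∀ i, A u v ≤ A i v then 0 else ⊤

/-- The support of the `j`-th column of the pattern of `A`. -/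
def colSupp {m n : ℕ} (A : Matrix (Fin m) (Fin n) ℝ) (j : Fin n) : Set (Fin m) :=
  {u | ∀ i, A u j ≤ A i j}


lemma Kdeg_zero : Kdeg 0 = ⊤ := if_pos rfl

lemma Kdeg_eq_top_iff {a : K} : Kdeg a = ⊤ ↔ a = 0 := by
  unfold Kdeg; split_ifs with h <;> simp [h]

lemma Kdeg_of_ne {a : K} (ha : a ≠ 0) : Kdeg a = ((a.order : ℝ) : WithTop ℝ) := if_neg ha

lemma Kdeg_le_of_coeff_ne {a : K} {e : ℝ} (hc : a.coeff e ≠ 0) : Kdeg a ≤ (e : WithTop ℝ) := by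
  have ha : a ≠ 0 := fun h => hc (by simp [h])
  rw [Kdeg_of_ne ha]
  exact_mod_cast HahnSeries.order_le_of_coeff_ne_zero hc

lemma coeff_zero_of_lt_Kdeg {a : K} {e : ℝ} (hlt : (e : WithTop ℝ) < Kdeg a) : a.coeff e = 0 := by
  by_contra hc; exact absurd (Kdeg_le_of_coeff_ne hc) (not_le.mpr hlt)

lemma Kdeg_coeff_ne {a : K} {e : ℝ} (hd : Kdeg a = (e : WithTop ℝ)) : a.coeff e ≠ 0 := by
  have ha : a ≠ 0 := by
    intro h; rw [h, Kdeg_zero] at hd; exact (WithTop.top_ne_coe) hd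
  have ho : a.order = e := by
    rw [Kdeg_of_ne ha] at hd; exact_mod_cast hd
  rw [← ho]; exact (mt HahnSeries.coeff_order_eq_zero.mp ha)

lemma Kdeg_eq_of_coeff {a : K} {e : ℝ} (hne : a.coeff e ≠ 0)
    (hlow : ∀ f : ℝ, f < e → a.coeff f = 0) : Kdeg a = (e : WithTop ℝ) := by
  have ha : a ≠ 0 := fun h => hne (by simp [h])
  rw [Kdeg_of_ne ha]
  norm_cast
  refine le_antisymm (HahnSeries.order_le_of_coeff_ne_zero hne) ?_
  by_contra hlt
  exact (mt HahnSeries.coeff_order_eq_zero.mp ha) (hlow _ (not_le.mp hlt))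

lemma Kdeg_neg (a : K) : Kdeg (-a) = Kdeg a := by
  by_cases ha : a = 0
  · simp [ha]
  rw [Kdeg_of_ne (neg_ne_zero.mpr ha), Kdeg_of_ne ha, HahnSeries.order_neg]

lemma Kdeg_single_one_mul (s : ℝ) (a : K) :
    Kdeg (HahnSeries.single s (1 : ℂ) * a) = (s : WithTop ℝ) + Kdeg a := by
  by_cases ha : a = 0
  · simp [ha, Kdeg_zero]
  have hs : (HahnSeries.single s (1 : ℂ)) ≠ 0 := HahnSeries.single_ne_zero one_ne_zero
  rw [Kdeg_of_ne ha, Kdeg_of_ne (mul_ne_zero hs ha), HahnSeries.order_mul hs ha,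
    HahnSeries.order_single one_ne_zero]
  push_cast; ring_nf

lemma wt_cancel {a b : WithTop ℝ} (c : ℝ) (h : a + (c : WithTop ℝ) ≤ b + (c : WithTop ℝ)) :
    a ≤ b :=
  (WithTop.add_le_add_iff_right (WithTop.coe_ne_top)).mp h

lemma wt_helper {T : WithTop ℝ} {a c o : ℝ}
    (H : (a : WithTop ℝ) + (o : WithTop ℝ) ≤ (c : WithTop ℝ) + T) :
    (a : WithTop ℝ) ≤ ((c - o : ℝ) : WithTop ℝ) + T := by
  apply wt_cancel o
  calc (a : WithTop ℝ) + (o : WithTop ℝ) ≤ (c : WithTop ℝ) + T := H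
    _ = ((c - o : ℝ) : WithTop ℝ) + T + (o : WithTop ℝ) := by
        rw [add_right_comm, ← WithTop.coe_add]
        norm_num

lemma pick_aux {Θ0 Θ1 : Set (Fin 5)} (h1 : 2 ≤ Θ0.ncard) (h2 : 2 ≤ Θ1.ncard)
    (h3 : 3 ≤ (Θ0 ∪ Θ1).ncard) (j : Fin 5) :
    ∃ q r : Fin 5, q ≠ r ∧ q ≠ j ∧ r ≠ j ∧ q ∈ Θ0 ∧ r ∈ Θ1 := by
  obtain ⟨q, hq, hqj⟩ := Set.exists_ne_of_one_lt_ncard (s := Θ0) (by omega) j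
  obtain ⟨r, hr, hrj⟩ := Set.exists_ne_of_one_lt_ncard (s := Θ1) (by omega) j
  by_cases hqr : q ≠ r
  · exact ⟨q, r, hqr, hqj, hrj, hq, hr⟩
  push_neg at hqr; subst hqr
  have hsub : ¬ (Θ0 ∪ Θ1 ⊆ ({j, q} : Set (Fin 5))) := by
    intro hsub
    have hle := Set.ncard_le_ncard hsub (Set.toFinite _)
    have h2' : ({j, q} : Set (Fin 5)).ncard ≤ 2 := by
      apply le_trans (Set.ncard_insert_le _ _)
      simp
    omega
  obtain ⟨u, hu, hu2⟩ := Set.not_subset.mp hsub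
  simp only [Set.mem_insert_iff, Set.mem_singleton_iff, not_or] at hu2
  obtain ⟨huj, huq⟩ := hu2
  rcases hu with hu | hu
  · exact ⟨u, q, huq, huj, hqj, hu, hr⟩
  · exact ⟨q, u, Ne.symm huq, hqj, huj, hq, hu⟩

theorem two_equation_system (A : Matrix (Fin 5) (Fin 2) K)
    (hcol : ∀ i : Fin 2, ∃ p : Fin 5, A p i ≠ 0)
    (hmin : ∀ p q : Fin 5, p ≠ q →
      Kdeg (A p 0 * A q 1 - A q 0 * A p 1) =
        min (Kdeg (A p 0) + Kdeg (A q 1)) (Kdeg (A q 0) + Kdeg (A p 1)))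
    (h : Fin 5 → ℝ)
    (Θ : Fin 2 → Set (Fin 5))
    (hΘ : ∀ i, Θ i = {η : Fin 5 | ∀ μ : Fin 5,
      Kdeg (A η i) + (h η : WithTop ℝ) ≤ Kdeg (A μ i) + (h μ : WithTop ℝ)})
    (h1 : 2 ≤ (Θ 0).ncard) (h2 : 2 ≤ (Θ 1).ncard) (h3 : 3 ≤ (Θ 0 ∪ Θ 1).ncard) :
    ∃ x : Fin 5 → K, (∀ j, Kdeg (x j) = (h j : WithTop ℝ)) ∧
      ∀ i : Fin 2, ∑ j, A j i * x j = 0 := by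
  -- minors
  set M : Fin 5 → Fin 5 → K := fun p q => A p 0 * A q 1 - A q 0 * A p 1 with hMdef
  obtain ⟨p0, hp0⟩ := hcol 0
  obtain ⟨p1, hp1⟩ := hcol 1
  -- nonvanishing of degrees on Θ
  have hne : ∀ i : Fin 2, ∀ q ∈ Θ i, Kdeg (A q i) ≠ ⊤ := by
    intro i q hq hT
    rw [hΘ i] at hq
    obtain ⟨p, hp⟩ := hcol i
    have hle := hq p
    rw [hT, top_add, top_le_iff] at hle
    exact WithTop.add_ne_top.mpr ⟨Kdeg_eq_top_iff.not.mpr hp, WithTop.coe_ne_top⟩ hle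
  -- key construction for each j
  have key : ∀ j : Fin 5, ∃ w : Fin 5 → K,
      (∀ i : Fin 2, ∑ μ, A μ i * w μ = 0) ∧ Kdeg (w j) = ((h j : ℝ) : WithTop ℝ) ∧
      ∀ l, ((h l : ℝ) : WithTop ℝ) ≤ Kdeg (w l) := by
    intro j
    obtain ⟨q, r, hqr, hqj, hrj, hqΘ, hrΘ⟩ := pick_aux h1 h2 h3 j
    have hq : ∀ μ, Kdeg (A q 0) + (h q : WithTop ℝ) ≤ Kdeg (A μ 0) + (h μ : WithTop ℝ) := by
      have := hqΘ; rw [hΘ 0] at this; exact this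
    have hr : ∀ μ, Kdeg (A r 1) + (h r : WithTop ℝ) ≤ Kdeg (A μ 1) + (h μ : WithTop ℝ) := by
      have := hrΘ; rw [hΘ 1] at this; exact this
    have hdq0 : Kdeg (A q 0) ≠ ⊤ := hne 0 q hqΘ
    have hdr1 : Kdeg (A r 1) ≠ ⊤ := hne 1 r hrΘ
    -- the degree of the main minor
    have hT12 : Kdeg (A q 0) + Kdeg (A r 1) ≤ Kdeg (A r 0) + Kdeg (A q 1) := by
      apply wt_cancel (h q + h r)
      have e1 := hq r
      have e2 := hr q
      calc Kdeg (A q 0) + Kdeg (A r 1) + ((h q + h r : ℝ) : WithTop ℝ)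
          = (Kdeg (A q 0) + (h q : WithTop ℝ)) + (Kdeg (A r 1) + (h r : WithTop ℝ)) := by
            push_cast; abel
        _ ≤ (Kdeg (A r 0) + (h r : WithTop ℝ)) + (Kdeg (A q 1) + (h q : WithTop ℝ)) :=
            add_le_add e1 e2
        _ = Kdeg (A r 0) + Kdeg (A q 1) + ((h q + h r : ℝ) : WithTop ℝ) := by
            push_cast; abel
    have hdM : Kdeg (M q r) = Kdeg (A q 0) + Kdeg (A r 1) := by
      rw [hMdef]; rw [hmin q r hqr]; exact min_eq_left hT12
    have hMne : M q r ≠ 0 := by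
      intro h0
      rw [h0, Kdeg_zero] at hdM
      exact WithTop.add_ne_top.mpr ⟨hdq0, hdr1⟩ hdM.symm
    set o : ℝ := (M q r).order with hodef
    have ho : ((o : ℝ) : WithTop ℝ) = Kdeg (A q 0) + Kdeg (A r 1) := by
      rw [← hdM, Kdeg_of_ne hMne]
    set s : ℝ := h j - o with hsdef
    refine ⟨fun μ => HahnSeries.single s (1 : ℂ) *
      ((if μ = j then M q r else 0) - (if μ = q then M j r else 0) +
        (if μ = r then M j q else 0)), ?_, ?_, ?_⟩
    · -- the linear relations
      intro i
      have : ∀ μ : Fin 5, A μ i * (HahnSeries.single s (1 : ℂ) *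
          ((if μ = j then M q r else 0) - (if μ = q then M j r else 0) +
            (if μ = r then M j q else 0))) =
          HahnSeries.single s (1 : ℂ) *
          ((if μ = j then A μ i * M q r else 0) - (if μ = q then A μ i * M j r else 0) +
            (if μ = r then A μ i * M j q else 0)) := by
        intro μ
        rw [mul_left_comm]
        congr 1
        split_ifs <;> ring
      simp only [this]
      rw [← Finset.mul_sum]
      have hsum : ∑ μ : Fin 5, ((if μ = j then A μ i * M q r else 0)
          - (if μ = q then A μ i * M j r else 0) + (if μ = r then A μ i * M j q else 0)) =
          A j i * M q r - A q i * M j r + A r i * M j q := by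
        rw [Finset.sum_add_distrib, Finset.sum_sub_distrib]
        simp [Finset.sum_ite_eq']
      rw [hsum]
      have hzero : A j i * M q r - A q i * M j r + A r i * M j q = 0 := by
        rw [hMdef]
        fin_cases i <;> simp <;> ring
      rw [hzero, mul_zero]
    · -- degree at j
      beta_reduce
      rw [if_pos rfl, if_neg (Ne.symm hqj), if_neg (Ne.symm hrj), sub_zero, add_zero,
        Kdeg_single_one_mul, Kdeg_of_ne hMne, hsdef]
      rw [← WithTop.coe_add]
      norm_num
      simp [hodef]
    · -- lower bounds everywhere
      intro l
      beta_reduce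
      rcases eq_or_ne l j with rfl | hlj
      · rw [if_pos rfl, if_neg (Ne.symm hqj), if_neg (Ne.symm hrj), sub_zero, add_zero,
          Kdeg_single_one_mul, Kdeg_of_ne hMne, hsdef, ← WithTop.coe_add]
        norm_num
        simp [hodef]
      rcases eq_or_ne l q with rfl | hlq
      · rw [if_neg hlj, if_pos rfl, if_neg (fun hh : l = r => hqr hh), zero_sub, add_zero,
          Kdeg_single_one_mul, Kdeg_neg, hsdef]
        apply wt_helper
        rw [ho, hmin j r (Ne.symm hrj)]
        rcases min_cases (Kdeg (A j 0) + Kdeg (A r 1)) (Kdeg (A r 0) + Kdeg (A j 1)) with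
          ⟨hm, _⟩ | ⟨hm, _⟩ <;> rw [hm]
        · -- h q + (dq0 + dr1) ≤ h j + (dj0 + dr1)
          calc (h l : WithTop ℝ) + (Kdeg (A l 0) + Kdeg (A r 1))
              = (Kdeg (A l 0) + (h l : WithTop ℝ)) + Kdeg (A r 1) := by abel
            _ ≤ (Kdeg (A j 0) + (h j : WithTop ℝ)) + Kdeg (A r 1) :=
                add_le_add_left (hq j) _
            _ = (h j : WithTop ℝ) + (Kdeg (A j 0) + Kdeg (A r 1)) := by abel
        · apply wt_cancel (h r)
          calc (h l : WithTop ℝ) + (Kdeg (A l 0) + Kdeg (A r 1)) + (h r : WithTop ℝ)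
              = (Kdeg (A l 0) + (h l : WithTop ℝ)) + (Kdeg (A r 1) + (h r : WithTop ℝ)) := by
                abel
            _ ≤ (Kdeg (A r 0) + (h r : WithTop ℝ)) + (Kdeg (A j 1) + (h j : WithTop ℝ)) :=
                add_le_add (hq r) (hr j)
            _ = (h j : WithTop ℝ) + (Kdeg (A r 0) + Kdeg (A j 1)) + (h r : WithTop ℝ) := by
                abel
      rcases eq_or_ne l r with rfl | hlr
      · rw [if_neg hlj, if_neg hlq, if_pos rfl, sub_zero, zero_add,
          Kdeg_single_one_mul, hsdef]
        apply wt_helper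
        rw [ho, hmin j q (Ne.symm hqj)]
        rcases min_cases (Kdeg (A j 0) + Kdeg (A q 1)) (Kdeg (A q 0) + Kdeg (A j 1)) with
          ⟨hm, _⟩ | ⟨hm, _⟩ <;> rw [hm]
        · apply wt_cancel (h q)
          calc (h l : WithTop ℝ) + (Kdeg (A q 0) + Kdeg (A l 1)) + (h q : WithTop ℝ)
              = (Kdeg (A q 0) + (h q : WithTop ℝ)) + (Kdeg (A l 1) + (h l : WithTop ℝ)) := by
                abel
            _ ≤ (Kdeg (A j 0) + (h j : WithTop ℝ)) + (Kdeg (A q 1) + (h q : WithTop ℝ)) :=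
                add_le_add (hq j) (hr q)
            _ = (h j : WithTop ℝ) + (Kdeg (A j 0) + Kdeg (A q 1)) + (h q : WithTop ℝ) := by
                abel
        · calc (h l : WithTop ℝ) + (Kdeg (A q 0) + Kdeg (A l 1))
              = Kdeg (A q 0) + (Kdeg (A l 1) + (h l : WithTop ℝ)) := by abel
            _ ≤ Kdeg (A q 0) + (Kdeg (A j 1) + (h j : WithTop ℝ)) :=
                add_le_add_right (hr j) _
            _ = (h j : WithTop ℝ) + (Kdeg (A q 0) + Kdeg (A j 1)) := by abel
      · rw [if_neg hlj, if_neg hlq, if_neg hlr]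
        norm_num [Kdeg_zero]
  -- combine the five vectors
  choose w hw1 hw2 hw3 using key
  -- coefficients of interest
  set b : Fin 5 → Fin 5 → ℂ := fun j l => (w j l).coeff (h l) with hbdef
  have hbl : ∀ l, b l l ≠ 0 := fun l => Kdeg_coeff_ne (hw2 l)
  set p : Fin 5 → Polynomial ℂ :=
    fun l => ∑ j : Fin 5, Polynomial.C (b j l) * Polynomial.X ^ (j : ℕ) with hpdef
  have hpne : ∀ l, p l ≠ 0 := by
    intro l hp0
    apply hbl l
    have hc : (p l).coeff (l : ℕ) = b l l := by
      rw [hpdef]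
      rw [Polynomial.finset_sum_coeff]
      rw [Finset.sum_eq_single l]
      · simp [Polynomial.coeff_C_mul, Polynomial.coeff_X_pow]
      · intro j _ hjl
        simp only [Polynomial.coeff_C_mul, Polynomial.coeff_X_pow]
        rw [if_neg (fun hh => hjl ((Fin.val_injective hh).symm))]
        simp
      · simp
    rw [← hc, hp0, Polynomial.coeff_zero]
  have hroots : (⋃ l : Fin 5, {z : ℂ | (p l).IsRoot z}).Finite :=
    Set.finite_iUnion (fun l => Polynomial.finite_setOf_isRoot (hpne l))
  obtain ⟨z, hz⟩ := (hroots.infinite_compl).nonempty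
  have hzl : ∀ l, (p l).eval z ≠ 0 := by
    intro l hl
    exact hz (Set.mem_iUnion.mpr ⟨l, hl⟩)
  refine ⟨fun l => ∑ j : Fin 5, (HahnSeries.single (0 : ℝ) (z ^ (j : ℕ)) : K) * w j l, ?_, ?_⟩
  · intro l
    beta_reduce
    apply Kdeg_eq_of_coeff
    · have hc : (∑ j : Fin 5, (HahnSeries.single (0 : ℝ) (z ^ (j : ℕ)) : K) * w j l).coeff (h l) =
          ∑ j : Fin 5, z ^ (j : ℕ) * b j l := by
        rw [← HahnSeries.coeff.addMonoidHom_apply, map_sum]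
        apply Finset.sum_congr rfl
        intro j _
        rw [HahnSeries.coeff.addMonoidHom_apply, HahnSeries.coeff_single_zero_mul, hbdef]
      rw [hc]
      have he : (p l).eval z = ∑ j : Fin 5, z ^ (j : ℕ) * b j l := by
        rw [hpdef, Polynomial.eval_finset_sum]
        apply Finset.sum_congr rfl
        intro j _
        rw [Polynomial.eval_mul, Polynomial.eval_C, Polynomial.eval_pow, Polynomial.eval_X,
          mul_comm]
      rw [← he]
      exact hzl l
    · intro f hf
      rw [← HahnSeries.coeff.addMonoidHom_apply, map_sum]
      apply Finset.sum_eq_zero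
      intro j _
      rw [HahnSeries.coeff.addMonoidHom_apply, HahnSeries.coeff_single_zero_mul,
        coeff_zero_of_lt_Kdeg (lt_of_lt_of_le (by exact_mod_cast hf) (hw3 j l)), mul_zero]
  · intro i
    calc ∑ l : Fin 5, A l i * ∑ j : Fin 5, (HahnSeries.single (0 : ℝ) (z ^ (j : ℕ)) : K) * w j l
        = ∑ l : Fin 5, ∑ j : Fin 5,
            (HahnSeries.single (0 : ℝ) (z ^ (j : ℕ)) : K) * (A l i * w j l) := by
          apply Finset.sum_congr rfl
          intro l _
          rw [Finset.mul_sum]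
          exact Finset.sum_congr rfl (fun j _ => (mul_left_comm _ _ _))
      _ = ∑ j : Fin 5, (HahnSeries.single (0 : ℝ) (z ^ (j : ℕ)) : K) *
            ∑ l : Fin 5, A l i * w j l := by
          rw [Finset.sum_comm]
          exact Finset.sum_congr rfl (fun j _ => (Finset.mul_sum _ _ _).symm)
      _ = 0 := by
          apply Finset.sum_eq_zero
          intro j _
          rw [hw1 j i, mul_zero]

end
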